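/- Theorem 2 (Infinite Horizon State-Option Transition Matrix). Fix ϑ ∈ ℝⁿ and suppose there exists μ : S × O → ℝ such that for every (s',o) the Cesàro averages of the shifted state–option marginals converge: (1/T) ∑_{t=1}^{T} d_t(s',o) → μ(s',o) as T → ∞. Then for all i, j: (1/T)·(G^T_ϑ)_{ij} → −∑_{s',o} μ(s',o) · ∂_i ln β(o,s',ϑ) · ∂_j ln(1 − β(o,s',ϑ) + β(o,s',ϑ)·π_O(s',o)) as T → ∞; that is, the normalized Fisher information matrix over state–option transition paths converges to minus the stationary expectation of the outer product of the score of the termination probability and the score of the continuation probability. -/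

import Mathlib

open scoped Classical

/-- Partial derivative of `f : ℝⁿ → ℝ` with respect to the `i`-th coordinate of `ϑ`. -/
noncomputable def pd {n : ℕ} (i : Fin n) (f : (Fin n → ℝ) → ℝ) (ϑ : Fin n → ℝ) : ℝ :=
  fderiv ℝ f ϑ (Pi.single i 1)

/-- Option-transition kernel
`K_ϑ(o,s',o') = (1 − β(o,s',ϑ))·𝟙[o' = o] + β(o,s',ϑ)·π_O(s',o')`. -/
noncomputable def optKernel {S O : Type*} [DecidableEq O] {n : ℕ}
    (β : O → S → (Fin n → ℝ) → ℝ) (πO : S → O → ℝ) (ϑ : Fin n → ℝ)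
    (o : O) (s' : S) (o' : O) : ℝ :=
  (1 - β o s' ϑ) * (if o' = o then 1 else 0) + β o s' ϑ * πO s' o'

/-- Probability of a state–option transition path
`x' = (o_0, s_1, o_1, s_2, …)`, encoded as `y : Fin (T+1) → O × S` with
`y t = (o_t, s_{t+1})`:
`Pr(x';ϑ) = d₀(o₀,s₁) · ∏_t K_ϑ(o_t, s_{t+1}, o_{t+1}) · Q(o_{t+1}, s_{t+1}, s_{t+2})`. -/
noncomputable def tPathProb {S O : Type*} [DecidableEq O] {n : ℕ}
    (β : O → S → (Fin n → ℝ) → ℝ) (πO : S → O → ℝ) (Q : O → S → S → ℝ)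
    (d0 : O × S → ℝ) (T : ℕ) (ϑ : Fin n → ℝ) (y : Fin (T + 1) → O × S) : ℝ :=
  d0 (y 0)
    * ∏ t : Fin T,
        (optKernel β πO ϑ (y t.castSucc).1 (y t.castSucc).2 (y t.succ).1
          * Q (y t.succ).1 (y t.castSucc).2 (y t.succ).2)

/-- `T`-step Fisher information matrix of the state–option transition path distribution:
`(G^T_ϑ)_{ij} = ∑_{x' : Pr(x';ϑ)>0} Pr(x';ϑ) ∂_i ln Pr(x';ϑ) ∂_j ln Pr(x';ϑ)`. -/
noncomputable def tPathFisher {S O : Type*} [Fintype S] [Fintype O] [DecidableEq O] {n : ℕ}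
    (β : O → S → (Fin n → ℝ) → ℝ) (πO : S → O → ℝ) (Q : O → S → S → ℝ)
    (d0 : O × S → ℝ) (T : ℕ) (ϑ : Fin n → ℝ) (i j : Fin n) : ℝ :=
  ∑ y ∈ Finset.univ.filter (fun y : Fin (T + 1) → O × S =>
      0 < tPathProb β πO Q d0 T ϑ y),
    tPathProb β πO Q d0 T ϑ y
      * pd i (fun ϑ' => Real.log (tPathProb β πO Q d0 T ϑ' y)) ϑ
      * pd j (fun ϑ' => Real.log (tPathProb β πO Q d0 T ϑ' y)) ϑ

/-- The shifted state–option marginal `d_t(s',o)`: the probability that the state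
entered at step `t` is `s'` while option `o` is the option active upon arrival, computed
from the horizon-`t` path distribution (it is independent of the horizon). -/
noncomputable def tMarginal {S O : Type*} [Fintype S] [Fintype O] [DecidableEq O]
    [DecidableEq S] {n : ℕ}
    (β : O → S → (Fin n → ℝ) → ℝ) (πO : S → O → ℝ) (Q : O → S → S → ℝ)
    (d0 : O × S → ℝ) (ϑ : Fin n → ℝ) (t : ℕ) (s' : S) (o : O) : ℝ :=
  ∑ y ∈ Finset.univ.filter (fun y : Fin (t + 1) → O × S => y (Fin.last t) = (o, s')),
    tPathProb β πO Q d0 t ϑ y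

section Aux
set_option linter.unusedSectionVars false

variable {S O : Type*} [Fintype S] [Fintype O] [DecidableEq O] [DecidableEq S] {n : ℕ}
  (β : O → S → (Fin n → ℝ) → ℝ) (πO : S → O → ℝ) (Q : O → S → S → ℝ)
  (d0 : O × S → ℝ) (ϑ : Fin n → ℝ)

noncomputable def scoreTerm (i : Fin n) (o : O) (s' : S) (o' : O) : ℝ :=
  (πO s' o' - if o' = o then 1 else 0) * pd i (β o s') ϑ / optKernel β πO ϑ o s' o'

noncomputable def pathScore (i : Fin n) (T : ℕ) (y : Fin (T + 1) → O × S) : ℝ :=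
  ∑ t : Fin T, scoreTerm β πO ϑ i (y t.castSucc).1 (y t.castSucc).2 (y t.succ).1

noncomputable def stepCov (i j : Fin n) (o : O) (s' : S) : ℝ :=
  ∑ o', optKernel β πO ϑ o s' o' *
    (scoreTerm β πO ϑ i o s' o' * scoreTerm β πO ϑ j o s' o')

noncomputable def baseC (T : ℕ) (y : Fin (T + 1) → O × S) : ℝ :=
  d0 (y 0) * ∏ t : Fin T, Q (y t.succ).1 (y t.castSucc).2 (y t.succ).2

lemma tPathProb_eq_baseC (T : ℕ) (y : Fin (T + 1) → O × S) (ϑ' : Fin n → ℝ) :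
    tPathProb β πO Q d0 T ϑ' y
      = baseC Q d0 T y
        * ∏ t : Fin T, optKernel β πO ϑ' (y t.castSucc).1 (y t.castSucc).2 (y t.succ).1 := by
  unfold tPathProb baseC
  rw [Finset.prod_mul_distrib]
  ring

lemma tPathProb_snoc (T : ℕ) (y : Fin (T + 1) → O × S) (p : O × S) :
    tPathProb β πO Q d0 (T + 1) ϑ (Fin.snoc y p)
      = tPathProb β πO Q d0 T ϑ y
        * (optKernel β πO ϑ (y (Fin.last T)).1 (y (Fin.last T)).2 p.1
            * Q p.1 (y (Fin.last T)).2 p.2) := by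
  unfold tPathProb
  have h0 : (Fin.snoc y p : Fin (T + 2) → O × S) 0 = y 0 := by
    rw [← Fin.castSucc_zero, Fin.snoc_castSucc]
  rw [Fin.prod_univ_castSucc, h0]
  simp only [Fin.succ_castSucc, Fin.snoc_castSucc, Fin.succ_last, Fin.snoc_last]
  ring

lemma pathScore_snoc (i : Fin n) (T : ℕ) (y : Fin (T + 1) → O × S) (p : O × S) :
    pathScore β πO ϑ i (T + 1) (Fin.snoc y p)
      = pathScore β πO ϑ i T y
        + scoreTerm β πO ϑ i (y (Fin.last T)).1 (y (Fin.last T)).2 p.1 := by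
  unfold pathScore
  rw [Fin.sum_univ_castSucc]
  simp only [Fin.succ_castSucc, Fin.snoc_castSucc, Fin.succ_last, Fin.snoc_last]

lemma sum_snoc {M : Type*} [AddCommMonoid M] (T : ℕ) (f : (Fin (T + 2) → O × S) → M) :
    ∑ y : Fin (T + 2) → O × S, f y
      = ∑ y : Fin (T + 1) → O × S, ∑ p : O × S, f (Fin.snoc y p) := by
  rw [← Equiv.sum_comp (Fin.snocEquiv (fun _ : Fin (T + 2) => O × S)) f, Fintype.sum_prod_type]
  rw [Finset.sum_comm]
  rfl

variable (hβ0 : ∀ o s ϑ, 0 < β o s ϑ) (hβ1 : ∀ o s ϑ, β o s ϑ < 1)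
  (hπO : ∀ s o, 0 < πO s o) (hπOsum : ∀ s, ∑ o, πO s o = 1)
  (hQ : ∀ o s' s'', 0 ≤ Q o s' s'') (hQsum : ∀ o s', ∑ s'', Q o s' s'' = 1)
  (hd0 : ∀ p, 0 ≤ d0 p)
  (hdiff : ∀ o s, DifferentiableAt ℝ (β o s) ϑ)

section Pos
include hβ0 hβ1 hπO

lemma optKernel_pos (o : O) (s' : S) (o' : O) : 0 < optKernel β πO ϑ o s' o' := by
  have h1 : 0 < β o s' ϑ := hβ0 _ _ _
  have h2 : β o s' ϑ < 1 := hβ1 _ _ _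
  have h3 := hπO s' o'
  unfold optKernel
  rcases eq_or_ne o' o with h | h <;> simp [h]
  · nlinarith [mul_pos h1 (hπO s' o)]
  · nlinarith

end Pos

lemma optKernel_sum (o : O) (s' : S) (hπOsum : ∀ s, ∑ o, πO s o = 1) :
    ∑ o', optKernel β πO ϑ o s' o' = 1 := by
  unfold optKernel
  rw [Finset.sum_add_distrib, ← Finset.mul_sum, ← Finset.mul_sum, hπOsum s',
    Finset.sum_ite_eq' Finset.univ o (fun _ => (1:ℝ))]
  simp

lemma hasFDerivAt_optKernel (o : O) (s' : S) (o' : O)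
    (hd : DifferentiableAt ℝ (β o s') ϑ) :
    HasFDerivAt (fun ϑ' => optKernel β πO ϑ' o s' o')
      ((πO s' o' - if o' = o then 1 else 0) • fderiv ℝ (β o s') ϑ) ϑ := by
  have h := (hd.hasFDerivAt.const_mul (πO s' o' - if o' = o then 1 else 0)).const_add
    (if o' = o then (1:ℝ) else 0)
  exact h.congr_of_eventuallyEq (Filter.Eventually.of_forall fun x => by unfold optKernel; ring)

include hβ0 hβ1 hπO in
lemma pd_log_optKernel (i : Fin n) (o : O) (s' : S) (o' : O)
    (hd : DifferentiableAt ℝ (β o s') ϑ) :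
    pd i (fun ϑ' => Real.log (optKernel β πO ϑ' o s' o')) ϑ = scoreTerm β πO ϑ i o s' o' := by
  have hK := optKernel_pos β πO ϑ hβ0 hβ1 hπO o s' o'
  have h := (hasFDerivAt_optKernel β πO ϑ o s' o' hd).log hK.ne'
  unfold pd scoreTerm
  rw [h.fderiv]
  simp only [ContinuousLinearMap.coe_smul', Pi.smul_apply, smul_eq_mul]
  unfold pd
  field_simp

include hβ0 hβ1 hπO hQ hd0 in
lemma tPathProb_nonneg (T : ℕ) (y : Fin (T + 1) → O × S) :
    0 ≤ tPathProb β πO Q d0 T ϑ y :=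
  mul_nonneg (hd0 _) <| Finset.prod_nonneg fun t _ =>
    mul_nonneg (optKernel_pos β πO ϑ hβ0 hβ1 hπO _ _ _).le (hQ _ _ _)

include hβ0 hβ1 hπO in
lemma baseC_pos (T : ℕ) (y : Fin (T + 1) → O × S)
    (h : 0 < tPathProb β πO Q d0 T ϑ y) : 0 < baseC Q d0 T y := by
  have hP : 0 < ∏ t : Fin T,
      optKernel β πO ϑ (y t.castSucc).1 (y t.castSucc).2 (y t.succ).1 :=
    Finset.prod_pos fun t _ => optKernel_pos β πO ϑ hβ0 hβ1 hπO _ _ _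
  rw [tPathProb_eq_baseC] at h
  by_contra hc
  push_neg at hc
  nlinarith

include hβ0 hβ1 hπO in
lemma pd_log_tPathProb (i : Fin n) (T : ℕ) (y : Fin (T + 1) → O × S)
    (hd : ∀ o s, DifferentiableAt ℝ (β o s) ϑ)
    (h : 0 < tPathProb β πO Q d0 T ϑ y) :
    pd i (fun ϑ' => Real.log (tPathProb β πO Q d0 T ϑ' y)) ϑ = pathScore β πO ϑ i T y := by
  have hC : 0 < baseC Q d0 T y := baseC_pos β πO Q d0 ϑ hβ0 hβ1 hπO T y h
  have hKpos : ∀ (ϑ' : Fin n → ℝ) (t : Fin T),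
      0 < optKernel β πO ϑ' (y t.castSucc).1 (y t.castSucc).2 (y t.succ).1 :=
    fun ϑ' t => optKernel_pos β πO ϑ' hβ0 hβ1 hπO _ _ _
  have hfun : (fun ϑ' => Real.log (tPathProb β πO Q d0 T ϑ' y))
      = fun ϑ' => Real.log (baseC Q d0 T y)
          + ∑ t : Fin T,
              Real.log (optKernel β πO ϑ' (y t.castSucc).1 (y t.castSucc).2 (y t.succ).1) := by
    funext ϑ'
    rw [tPathProb_eq_baseC,
      Real.log_mul hC.ne' (Finset.prod_pos fun t _ => hKpos ϑ' t).ne',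
      Real.log_prod]
    exact fun t _ => (hKpos ϑ' t).ne'
  rw [hfun]
  have H : HasFDerivAt
      (fun ϑ' => Real.log (baseC Q d0 T y)
        + ∑ t : Fin T,
            Real.log (optKernel β πO ϑ' (y t.castSucc).1 (y t.castSucc).2 (y t.succ).1))
      (∑ t : Fin T,
        (optKernel β πO ϑ (y t.castSucc).1 (y t.castSucc).2 (y t.succ).1)⁻¹ •
          ((πO (y t.castSucc).2 (y t.succ).1
              - if (y t.succ).1 = (y t.castSucc).1 then 1 else 0) •
            fderiv ℝ (β (y t.castSucc).1 (y t.castSucc).2) ϑ)) ϑ := by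
    exact (HasFDerivAt.fun_sum fun t _ =>
      (hasFDerivAt_optKernel β πO ϑ _ _ _ (hd _ _)).log (hKpos ϑ t).ne').const_add _
  unfold pd
  rw [H.fderiv]
  rw [ContinuousLinearMap.sum_apply]
  unfold pathScore scoreTerm pd
  refine Finset.sum_congr rfl fun t _ => ?_
  simp only [ContinuousLinearMap.coe_smul', Pi.smul_apply, smul_eq_mul]
  field_simp

noncomputable def baseC' := baseC (S := S) (O := O) Q d0

include hβ0 hβ1 hπO hQ hd0 in
lemma tPathFisher_eq (i j : Fin n) (T : ℕ)
    (hd : ∀ o s, DifferentiableAt ℝ (β o s) ϑ) :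
    tPathFisher β πO Q d0 T ϑ i j
      = ∑ y : Fin (T + 1) → O × S,
          tPathProb β πO Q d0 T ϑ y * pathScore β πO ϑ i T y * pathScore β πO ϑ j T y := by
  unfold tPathFisher
  rw [Finset.sum_filter]
  refine Finset.sum_congr rfl fun y _ => ?_
  by_cases h : 0 < tPathProb β πO Q d0 T ϑ y
  · rw [if_pos h, pd_log_tPathProb β πO Q d0 ϑ hβ0 hβ1 hπO i T y hd h,
      pd_log_tPathProb β πO Q d0 ϑ hβ0 hβ1 hπO j T y hd h]
  · have h0 : tPathProb β πO Q d0 T ϑ y = 0 :=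
      le_antisymm (not_lt.mp h) (tPathProb_nonneg β πO Q d0 ϑ hβ0 hβ1 hπO hQ hd0 T y)
    rw [if_neg h, h0, zero_mul, zero_mul]

include hβ0 hβ1 hπO in
lemma K_mul_score (i : Fin n) (o : O) (s' : S) (o' : O) :
    optKernel β πO ϑ o s' o' * scoreTerm β πO ϑ i o s' o'
      = (πO s' o' - if o' = o then 1 else 0) * pd i (β o s') ϑ := by
  rw [scoreTerm, mul_comm,
    div_mul_cancel₀ _ (optKernel_pos β πO ϑ hβ0 hβ1 hπO o s' o').ne']

include hβ0 hβ1 hπO hπOsum in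
lemma sum_K_score (i : Fin n) (o : O) (s' : S) :
    ∑ o', optKernel β πO ϑ o s' o' * scoreTerm β πO ϑ i o s' o' = 0 := by
  have h : ∀ o' : O, optKernel β πO ϑ o s' o' * scoreTerm β πO ϑ i o s' o'
      = (πO s' o' - if o' = o then 1 else 0) * pd i (β o s') ϑ :=
    fun o' => K_mul_score β πO ϑ hβ0 hβ1 hπO i o s' o'
  rw [Finset.sum_congr rfl fun o' _ => h o', ← Finset.sum_mul]
  have : ∑ o', (πO s' o' - if o' = o then 1 else 0) = 0 := by
    rw [Finset.sum_sub_distrib, hπOsum s',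
      Finset.sum_ite_eq' Finset.univ o (fun _ => (1:ℝ))]
    simp
  rw [this, zero_mul]

include hβ0 hβ1 hπO hπOsum hQsum in
lemma innerSumKQ (i j : Fin n) (o : O) (s' : S) (a b : ℝ) :
    ∑ p : O × S, (optKernel β πO ϑ o s' p.1 * Q p.1 s' p.2)
        * ((a + scoreTerm β πO ϑ i o s' p.1) * (b + scoreTerm β πO ϑ j o s' p.1))
      = a * b + stepCov β πO ϑ i j o s' := by
  rw [Fintype.sum_prod_type]
  have h1 : ∀ o' : O,
      ∑ s'' : S, (optKernel β πO ϑ o s' o' * Q o' s' s'')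
          * ((a + scoreTerm β πO ϑ i o s' o') * (b + scoreTerm β πO ϑ j o s' o'))
        = optKernel β πO ϑ o s' o'
            * ((a + scoreTerm β πO ϑ i o s' o') * (b + scoreTerm β πO ϑ j o s' o')) := by
    intro o'
    rw [← Finset.sum_mul, ← Finset.mul_sum, hQsum o' s', mul_one]
  rw [Finset.sum_congr rfl fun o' _ => h1 o']
  have h2 : ∀ o' : O,
      optKernel β πO ϑ o s' o'
          * ((a + scoreTerm β πO ϑ i o s' o') * (b + scoreTerm β πO ϑ j o s' o'))
        = a * b * optKernel β πO ϑ o s' o'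
          + a * (optKernel β πO ϑ o s' o' * scoreTerm β πO ϑ j o s' o')
          + b * (optKernel β πO ϑ o s' o' * scoreTerm β πO ϑ i o s' o')
          + optKernel β πO ϑ o s' o'
              * (scoreTerm β πO ϑ i o s' o' * scoreTerm β πO ϑ j o s' o') := by
    intro o'; ring
  rw [Finset.sum_congr rfl fun o' _ => h2 o']
  rw [Finset.sum_add_distrib, Finset.sum_add_distrib, Finset.sum_add_distrib,
    ← Finset.mul_sum, ← Finset.mul_sum, ← Finset.mul_sum,
    optKernel_sum β πO ϑ o s' hπOsum,
    sum_K_score β πO ϑ hβ0 hβ1 hπO hπOsum i o s',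
    sum_K_score β πO ϑ hβ0 hβ1 hπO hπOsum j o s']
  unfold stepCov
  ring

lemma sum_last_fiber (T : ℕ) (g : O × S → ℝ) :
    ∑ y : Fin (T + 1) → O × S, tPathProb β πO Q d0 T ϑ y * g (y (Fin.last T))
      = ∑ p : O × S, tMarginal β πO Q d0 ϑ T p.2 p.1 * g p := by
  rw [← Finset.sum_fiberwise Finset.univ
    (fun y : Fin (T + 1) → O × S => y (Fin.last T))
    (fun y => tPathProb β πO Q d0 T ϑ y * g (y (Fin.last T)))]
  refine Finset.sum_congr rfl fun p _ => ?_
  rw [tMarginal, Finset.sum_mul]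
  refine Finset.sum_congr ?_ fun y hy => ?_
  · apply Finset.filter_congr
    intro y _
    simp
  · have := (Finset.mem_filter.mp hy).2
    rw [this]

include hβ0 hβ1 hπO hπOsum hQsum in
lemma fisher_sum_eq (i j : Fin n) : ∀ T : ℕ,
    (∑ y : Fin (T + 1) → O × S,
        tPathProb β πO Q d0 T ϑ y * pathScore β πO ϑ i T y * pathScore β πO ϑ j T y)
      = ∑ t ∈ Finset.range T, ∑ p : O × S,
          tMarginal β πO Q d0 ϑ t p.2 p.1 * stepCov β πO ϑ i j p.1 p.2 := by
  intro T
  induction T with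
  | zero => simp [pathScore]
  | succ T ih =>
    rw [sum_snoc]
    have hstep : ∀ y : Fin (T + 1) → O × S,
        ∑ p : O × S, tPathProb β πO Q d0 (T + 1) ϑ (Fin.snoc y p)
            * pathScore β πO ϑ i (T + 1) (Fin.snoc y p)
            * pathScore β πO ϑ j (T + 1) (Fin.snoc y p)
        = tPathProb β πO Q d0 T ϑ y * pathScore β πO ϑ i T y * pathScore β πO ϑ j T y
          + tPathProb β πO Q d0 T ϑ y
              * stepCov β πO ϑ i j (y (Fin.last T)).1 (y (Fin.last T)).2 := by
      intro y
      have hrw : ∀ p : O × S,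
          tPathProb β πO Q d0 (T + 1) ϑ (Fin.snoc y p)
              * pathScore β πO ϑ i (T + 1) (Fin.snoc y p)
              * pathScore β πO ϑ j (T + 1) (Fin.snoc y p)
          = tPathProb β πO Q d0 T ϑ y
            * ((optKernel β πO ϑ (y (Fin.last T)).1 (y (Fin.last T)).2 p.1
                  * Q p.1 (y (Fin.last T)).2 p.2)
              * ((pathScore β πO ϑ i T y
                    + scoreTerm β πO ϑ i (y (Fin.last T)).1 (y (Fin.last T)).2 p.1)
                * (pathScore β πO ϑ j T y
                    + scoreTerm β πO ϑ j (y (Fin.last T)).1 (y (Fin.last T)).2 p.1))) := by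
        intro p
        rw [tPathProb_snoc, pathScore_snoc, pathScore_snoc]
        ring
      rw [Finset.sum_congr rfl fun p _ => hrw p, ← Finset.mul_sum,
        innerSumKQ β πO Q ϑ hβ0 hβ1 hπO hπOsum hQsum i j (y (Fin.last T)).1 (y (Fin.last T)).2
          (pathScore β πO ϑ i T y) (pathScore β πO ϑ j T y)]
      ring
    rw [Finset.sum_congr rfl fun y _ => hstep y, Finset.sum_add_distrib, ih,
      sum_last_fiber β πO Q d0 ϑ T
        (fun p => stepCov β πO ϑ i j p.1 p.2),
      Finset.sum_range_succ]

include hβ0 hβ1 hπO in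
lemma pd_log_beta (i : Fin n) (o : O) (s' : S)
    (hd : DifferentiableAt ℝ (β o s') ϑ) :
    pd i (fun ϑ' => Real.log (β o s' ϑ')) ϑ = pd i (β o s') ϑ / β o s' ϑ := by
  have h := hd.hasFDerivAt.log (hβ0 o s' ϑ).ne'
  unfold pd
  rw [h.fderiv]
  simp only [ContinuousLinearMap.coe_smul', Pi.smul_apply, smul_eq_mul]
  rw [div_eq_inv_mul]

include hβ0 hβ1 hπO in
lemma pd_log_betaBar (j : Fin n) (o : O) (s' : S)
    (hd : DifferentiableAt ℝ (β o s') ϑ) :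
    pd j (fun ϑ' => Real.log (1 - β o s' ϑ' + β o s' ϑ' * πO s' o)) ϑ
      = (πO s' o - 1) * pd j (β o s') ϑ / optKernel β πO ϑ o s' o := by
  have hval : optKernel β πO ϑ o s' o = 1 - β o s' ϑ + β o s' ϑ * πO s' o := by
    simp [optKernel]
  have hKpos := optKernel_pos β πO ϑ hβ0 hβ1 hπO o s' o
  have hg : HasFDerivAt (fun ϑ' => 1 - β o s' ϑ' + β o s' ϑ' * πO s' o)
      ((πO s' o - 1) • fderiv ℝ (β o s') ϑ) ϑ := by
    have h := (hd.hasFDerivAt.const_mul (πO s' o - 1)).const_add (1:ℝ)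
    exact h.congr_of_eventuallyEq (Filter.Eventually.of_forall fun x => by ring)
  have hne : 1 - β o s' ϑ + β o s' ϑ * πO s' o ≠ 0 := by rw [← hval]; exact hKpos.ne'
  have h := hg.log hne
  unfold pd
  rw [h.fderiv]
  simp only [ContinuousLinearMap.coe_smul', Pi.smul_apply, smul_eq_mul]
  rw [hval]
  field_simp

include hβ0 hβ1 hπO hπOsum in
lemma stepCov_eq (i j : Fin n) (o : O) (s' : S)
    (hd : DifferentiableAt ℝ (β o s') ϑ) :
    stepCov β πO ϑ i j o s'
      = -(pd i (fun ϑ' => Real.log (β o s' ϑ')) ϑ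
          * pd j (fun ϑ' => Real.log (1 - β o s' ϑ' + β o s' ϑ' * πO s' o)) ϑ) := by
  rw [pd_log_beta β πO ϑ hβ0 hβ1 hπO i o s' hd,
    pd_log_betaBar β πO ϑ hβ0 hβ1 hπO j o s' hd]
  have hB : (0:ℝ) < β o s' ϑ := hβ0 o s' ϑ
  have hKo : optKernel β πO ϑ o s' o = 1 - β o s' ϑ + β o s' ϑ * πO s' o := by
    simp [optKernel]
  have hKpos := optKernel_pos β πO ϑ hβ0 hβ1 hπO o s' o
  unfold stepCov
  rw [← Finset.add_sum_erase _ _ (Finset.mem_univ o)]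
  have herase : ∑ o' ∈ Finset.univ.erase o,
      optKernel β πO ϑ o s' o' *
        (scoreTerm β πO ϑ i o s' o' * scoreTerm β πO ϑ j o s' o')
      = (1 - πO s' o) * (pd i (β o s') ϑ * pd j (β o s') ϑ / β o s' ϑ) := by
    have hterm : ∀ o' ∈ Finset.univ.erase o,
        optKernel β πO ϑ o s' o' *
          (scoreTerm β πO ϑ i o s' o' * scoreTerm β πO ϑ j o s' o')
        = πO s' o' * (pd i (β o s') ϑ * pd j (β o s') ϑ / β o s' ϑ) := by
      intro o' ho'
      have hne : o' ≠ o := Finset.ne_of_mem_erase ho'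
      have hKv : optKernel β πO ϑ o s' o' = β o s' ϑ * πO s' o' := by
        simp [optKernel, hne]
      rw [scoreTerm, scoreTerm, hKv, if_neg hne]
      have hπ : (0:ℝ) < πO s' o' := hπO s' o'
      field_simp
      ring
    rw [Finset.sum_congr rfl hterm, ← Finset.sum_mul,
      Finset.sum_erase_eq_sub (Finset.mem_univ o), hπOsum s']
  rw [herase, scoreTerm, scoreTerm, if_pos rfl, hKo]
  have hne : 1 - β o s' ϑ + β o s' ϑ * πO s' o ≠ 0 := by rw [← hKo]; exact hKpos.ne'
  field_simp
  ring

end Aux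

theorem infinite_horizon_state_option_transition_matrix
    {S O : Type*} [Fintype S] [Fintype O] [DecidableEq O] [DecidableEq S]
    [Nonempty S] [Nonempty O] {n : ℕ}
    (β : O → S → (Fin n → ℝ) → ℝ)
    (hβ0 : ∀ o s ϑ, 0 < β o s ϑ) (hβ1 : ∀ o s ϑ, β o s ϑ < 1)
    (hβsmooth : ∀ o s, ContDiff ℝ 2 (β o s))
    (πO : S → O → ℝ) (hπO : ∀ s o, 0 < πO s o) (hπOsum : ∀ s, ∑ o, πO s o = 1)
    (Q : O → S → S → ℝ) (hQ : ∀ o s' s'', 0 ≤ Q o s' s'')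
    (hQsum : ∀ o s', ∑ s'', Q o s' s'' = 1)
    (d0 : O × S → ℝ) (hd0 : ∀ p, 0 ≤ d0 p) (hd0sum : ∑ p, d0 p = 1)
    (ϑ : Fin n → ℝ)
    (μ : S × O → ℝ)
    (hμ : ∀ s' o, Filter.Tendsto
      (fun T : ℕ => (1 / (T : ℝ)) * ∑ t ∈ Finset.range T, tMarginal β πO Q d0 ϑ t s' o)
      Filter.atTop (nhds (μ (s', o))))
    (i j : Fin n) :
    Filter.Tendsto (fun T : ℕ => (1 / (T : ℝ)) * tPathFisher β πO Q d0 T ϑ i j)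
      Filter.atTop
      (nhds (-∑ s', ∑ o, μ (s', o)
        * pd i (fun ϑ' => Real.log (β o s' ϑ')) ϑ
        * pd j (fun ϑ' => Real.log (1 - β o s' ϑ' + β o s' ϑ' * πO s' o)) ϑ)) := by
  have hdiff : ∀ o s, DifferentiableAt ℝ (β o s) ϑ := fun o s =>
    (((hβsmooth o s).differentiable (by norm_num)) ϑ)
  have key : ∀ T : ℕ, tPathFisher β πO Q d0 T ϑ i j
      = ∑ p : O × S, stepCov β πO ϑ i j p.1 p.2
          * ∑ t ∈ Finset.range T, tMarginal β πO Q d0 ϑ t p.2 p.1 := by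
    intro T
    rw [tPathFisher_eq β πO Q d0 ϑ hβ0 hβ1 hπO hQ hd0 i j T hdiff,
      fisher_sum_eq β πO Q d0 ϑ hβ0 hβ1 hπO hπOsum hQsum i j T,
      Finset.sum_comm]
    refine Finset.sum_congr rfl fun p _ => ?_
    rw [Finset.mul_sum]
    refine Finset.sum_congr rfl fun t _ => by ring
  have hfun : ∀ T : ℕ, (1 / (T : ℝ)) * tPathFisher β πO Q d0 T ϑ i j
      = ∑ p : O × S, stepCov β πO ϑ i j p.1 p.2
          * ((1 / (T : ℝ)) * ∑ t ∈ Finset.range T, tMarginal β πO Q d0 ϑ t p.2 p.1) := by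
    intro T
    rw [key T, Finset.mul_sum]
    exact Finset.sum_congr rfl fun p _ => by ring
  have hlim : Filter.Tendsto
      (fun T : ℕ => ∑ p : O × S, stepCov β πO ϑ i j p.1 p.2
          * ((1 / (T : ℝ)) * ∑ t ∈ Finset.range T, tMarginal β πO Q d0 ϑ t p.2 p.1))
      Filter.atTop
      (nhds (∑ p : O × S, stepCov β πO ϑ i j p.1 p.2 * μ (p.2, p.1))) := by
    refine tendsto_finset_sum _ fun p _ => ?_
    exact (hμ p.2 p.1).const_mul _
  have hval : ∑ p : O × S, stepCov β πO ϑ i j p.1 p.2 * μ (p.2, p.1)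
      = -∑ s', ∑ o, μ (s', o)
          * pd i (fun ϑ' => Real.log (β o s' ϑ')) ϑ
          * pd j (fun ϑ' => Real.log (1 - β o s' ϑ' + β o s' ϑ' * πO s' o)) ϑ := by
    rw [Fintype.sum_prod_type, Finset.sum_comm, ← Finset.sum_neg_distrib]
    refine Finset.sum_congr rfl fun s' _ => ?_
    rw [← Finset.sum_neg_distrib]
    refine Finset.sum_congr rfl fun o _ => ?_
    rw [stepCov_eq β πO ϑ hβ0 hβ1 hπO hπOsum i j o s' (hdiff o s')]
    ring
  rw [show (fun T : ℕ => (1 / (T : ℝ)) * tPathFisher β πO Q d0 T ϑ i j)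
      = (fun T : ℕ => ∑ p : O × S, stepCov β πO ϑ i j p.1 p.2
          * ((1 / (T : ℝ)) * ∑ t ∈ Finset.range T, tMarginal β πO Q d0 ϑ t p.2 p.1))
    from funext hfun, ← hval]
  exact hlim
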